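/- Let A be a set of r vertices in a (k+1)-uniform hypergraph H with maximum degree Δ and pairwise codegrees at most D₂, where 2 ≤ r ≤ k, and let j ∈ [r-1]. Define an A-cover of size j as a set of j pairwise-disjoint edges each intersecting A whose union contains A. Then the number of A-covers of size j is at most C(r,2)·(k+1)^{2k}·D₂·Δ^{j-1}. -/

import Mathlib

open scoped Classical

set_option maxHeartbeats 2000000 in
/-- The number of A-covers of size j (j pairwise-disjoint edges, each meeting A, whose
union contains A) in a (k+1)-uniform hypergraph with maximum degree Δ and pairwise
codegrees at most D₂ is at most C(r,2)·(k+1)^{2k}·D₂·Δ^{j-1}, for |A| = r,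
2 ≤ r ≤ k and 1 ≤ j ≤ r-1. -/
theorem stmt_4 {V : Type*} [DecidableEq V] (EH : Finset (Finset V)) (k r j Δ D₂ : ℕ)
    (huniform : ∀ e ∈ EH, e.card = k + 1)
    (hΔ : ∀ v : V, (EH.filter fun e => v ∈ e).card ≤ Δ)
    (hcodeg : ∀ u v : V, u ≠ v →
      (EH.filter fun e => u ∈ e ∧ v ∈ e).card ≤ D₂)
    (A : Finset V) (hA : A.card = r) (hr2 : 2 ≤ r) (hrk : r ≤ k)
    (hj1 : 1 ≤ j) (hjr : j ≤ r - 1) :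
    (EH.powerset.filter (fun C => C.card = j ∧
        (∀ e ∈ C, ¬ Disjoint e A) ∧
        (∀ e ∈ C, ∀ f ∈ C, e ≠ f → Disjoint e f) ∧
        A ⊆ C.sup id)).card
      ≤ r.choose 2 * (k + 1) ^ (2 * k) * D₂ * Δ ^ (j - 1) := by
  classical
  set S : Finset (Finset (Finset V)) := EH.powerset.filter (fun C => C.card = j ∧
        (∀ e ∈ C, ¬ Disjoint e A) ∧
        (∀ e ∈ C, ∀ f ∈ C, e ≠ f → Disjoint e f) ∧
        A ⊆ C.sup id) with hSdef
  have hjltr : j < r := by omega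
  -- enumeration of A
  have hcardA : Fintype.card ↥A = r := by simpa using hA
  set eqv : ↥A ≃ Fin r := Fintype.equivFinOfCardEq hcardA with heqv
  set ι : Fin r → V := fun m => ((eqv.symm m : ↥A) : V) with hι
  have hιA : ∀ m, ι m ∈ A := fun m => (eqv.symm m).2
  have hιsurj : ∀ a ∈ A, ∃ m, ι m = a := by
    intro a ha
    exact ⟨eqv ⟨a, ha⟩, by simp [hι]⟩
  -- the "edge through a vertex" function
  set F : Finset (Finset V) → V → Finset V :=
    fun C a => if h : ∃ e, e ∈ C ∧ a ∈ e then h.choose else ∅ with hFdef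
  -- basic membership facts about S
  have hSmem : ∀ C ∈ S, C ⊆ EH ∧ C.card = j ∧
      (∀ e ∈ C, ¬ Disjoint e A) ∧ (∀ e ∈ C, ∀ f ∈ C, e ≠ f → Disjoint e f) ∧
      A ⊆ C.sup id := by
    intro C hC
    rw [hSdef, Finset.mem_filter, Finset.mem_powerset] at hC
    tauto
  have hFmem : ∀ C ∈ S, ∀ a ∈ A, F C a ∈ C ∧ a ∈ F C a := by
    intro C hC a ha
    obtain ⟨-, -, -, -, hcov⟩ := hSmem C hC
    have := hcov ha
    rw [Finset.mem_sup] at this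
    obtain ⟨e, he, hae⟩ := this
    have h : ∃ e, e ∈ C ∧ a ∈ e := ⟨e, he, hae⟩
    rw [hFdef]
    simp only [dif_pos h]
    exact h.choose_spec
  have hFuniq : ∀ C ∈ S, ∀ a, ∀ e ∈ C, a ∈ e → e = F C a := by
    intro C hC a e he hae
    have h : ∃ e, e ∈ C ∧ a ∈ e := ⟨e, he, hae⟩
    have hfc : F C a ∈ C ∧ a ∈ F C a := by
      rw [hFdef]; simp only [dif_pos h]; exact h.choose_spec
    by_contra hne
    obtain ⟨-, -, -, hdisj, -⟩ := hSmem C hC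
    have := hdisj e he (F C a) hfc.1 hne
    exact (Finset.disjoint_left.1 this hae) hfc.2
  have hCeq : ∀ C ∈ S, C = A.image (F C) := by
    intro C hC
    apply Finset.ext
    intro e
    constructor
    · intro he
      obtain ⟨-, -, hmeet, -, -⟩ := hSmem C hC
      obtain ⟨a, hae, haA⟩ := Finset.not_disjoint_iff.1 (hmeet e he)
      exact Finset.mem_image.2 ⟨a, haA, (hFuniq C hC a e he hae).symm⟩
    · intro he
      obtain ⟨a, haA, hFa⟩ := Finset.mem_image.1 he
      exact hFa ▸ (hFmem C hC a haA).1
  -- the labelling function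
  set σf : Finset (Finset V) → Fin r → Fin r :=
    fun C i => (Finset.univ.filter (fun m => F C (ι m) = F C (ι i))).min'
      ⟨i, by simp⟩ with hσf
  have hσ1 : ∀ C i, F C (ι (σf C i)) = F C (ι i) := by
    intro C i
    have := Finset.min'_mem (Finset.univ.filter (fun m => F C (ι m) = F C (ι i)))
      ⟨i, by simp⟩
    rw [Finset.mem_filter] at this
    exact this.2
  have hσ2 : ∀ C i i', F C (ι i) = F C (ι i') → σf C i = σf C i' := by
    intro C i i' h
    have hset : (Finset.univ.filter (fun m => F C (ι m) = F C (ι i)))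
        = (Finset.univ.filter (fun m => F C (ι m) = F C (ι i'))) := by
      apply Finset.filter_congr
      intro m _
      simp [h]
    rw [hσf]
    simp only
    congr 1
  have hσidem : ∀ C i, σf C (σf C i) = σf C i := fun C i => hσ2 C _ _ (hσ1 C i)
  -- the chosen pair
  set pr : Finset (Finset V) → Finset V :=
    fun C => if h : ∃ p : V × V, p.1 ∈ A ∧ p.2 ∈ A ∧ p.1 ≠ p.2 ∧ F C p.1 = F C p.2
      then {h.choose.1, h.choose.2} else ∅ with hpr
  have hprS : ∀ C ∈ S, pr C ∈ A.powersetCard 2 ∧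
      ∀ u v, u ≠ v → pr C = {u, v} → F C u = F C v := by
    intro C hC
    obtain ⟨-, hcard, -, -, -⟩ := hSmem C hC
    have hex : ∃ p : V × V, p.1 ∈ A ∧ p.2 ∈ A ∧ p.1 ≠ p.2 ∧ F C p.1 = F C p.2 := by
      have hlt : C.card < A.card := by rw [hcard, hA]; exact hjltr
      obtain ⟨x, hx, y, hy, hxy, hfxy⟩ :=
        Finset.exists_ne_map_eq_of_card_lt_of_maps_to hlt
          (fun a ha => (hFmem C hC a ha).1)
      exact ⟨(x, y), hx, hy, hxy, hfxy⟩
    obtain ⟨h1, h2, h3, h4⟩ := hex.choose_spec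
    have hpreq : pr C = {hex.choose.1, hex.choose.2} := by
      rw [hpr]; simp only [dif_pos hex]
    constructor
    · rw [hpreq, Finset.mem_powersetCard]
      refine ⟨?_, Finset.card_pair h3⟩
      intro x hx
      rcases Finset.mem_insert.1 hx with h | h
      · exact h ▸ h1
      · rw [Finset.mem_singleton] at h; exact h ▸ h2
    · intro u v huv hpuv
      rw [hpreq] at hpuv
      have hu : u = hex.choose.1 ∨ u = hex.choose.2 := by
        have : u ∈ ({hex.choose.1, hex.choose.2} : Finset V) := by rw [hpuv]; simp
        simpa using this
      have hv : v = hex.choose.1 ∨ v = hex.choose.2 := by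
        have : v ∈ ({hex.choose.1, hex.choose.2} : Finset V) := by rw [hpuv]; simp
        simpa using this
      rcases hu with hu1 | hu1 <;> rcases hv with hv1 | hv1 <;>
        subst hu1 <;> subst hv1 <;>
        first
        | exact absurd rfl huv
        | exact h4
        | exact h4.symm
  -- signature 1
  set sig₁ : Finset (Finset V) → Finset V × (Fin r → Fin r) :=
    fun C => (pr C, σf C) with hsig₁
  -- fiber bound: each fiber of sig₁ has size ≤ D₂ * Δ ^ (j-1)
  have hfiber₁ : ∀ y ∈ S.image sig₁,
      (S.filter (fun C => sig₁ C = y)).card ≤ D₂ * Δ ^ (j - 1) := by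
    intro y hy
    obtain ⟨C₀, hC₀S, hC₀y⟩ := Finset.mem_image.1 hy
    set T₁ := S.filter (fun C => sig₁ C = y) with hT₁
    have hC₀T₁ : C₀ ∈ T₁ := Finset.mem_filter.2 ⟨hC₀S, hC₀y⟩
    -- get the pair
    obtain ⟨hP2, -⟩ := hprS C₀ hC₀S
    have hy1 : y.1 = pr C₀ := by rw [← hC₀y]
    have hy1card : y.1.card = 2 := by
      rw [hy1]; exact (Finset.mem_powersetCard.1 hP2).2
    obtain ⟨u, v, huv, hPuv⟩ := Finset.card_eq_two.1 hy1card
    have huA : u ∈ A := by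
      have : u ∈ y.1 := by rw [hPuv]; simp
      rw [hy1] at this
      exact (Finset.mem_powersetCard.1 hP2).1 this
    have hvA : v ∈ A := by
      have : v ∈ y.1 := by rw [hPuv]; simp
      rw [hy1] at this
      exact (Finset.mem_powersetCard.1 hP2).1 this
    -- all C in the fiber have F C u = F C v
    have hFuv : ∀ C ∈ T₁, F C u = F C v := by
      intro C hC
      have hCS : C ∈ S := (Finset.mem_filter.1 hC).1
      have hCy : sig₁ C = y := (Finset.mem_filter.1 hC).2
      have : pr C = {u, v} := by
        have : pr C = y.1 := by rw [← hCy]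
        rw [this, hPuv]
      exact (hprS C hCS).2 u v huv this
    have hσy : ∀ C ∈ T₁, σf C = y.2 := by
      intro C hC
      have hCy : sig₁ C = y := (Finset.mem_filter.1 hC).2
      rw [← hCy]
    set σ : Fin r → Fin r := y.2 with hσ
    obtain ⟨i_u, hi_u⟩ := hιsurj u huA
    set M : Finset (Fin r) := (Finset.univ.image σ).erase (σ i_u) with hM
    -- card of M
    have hMcard : M.card = j - 1 := by
      have himσ : Finset.univ.image σ = Finset.univ.image (σf C₀) := by
        rw [hσy C₀ hC₀T₁]
      have hinj : Set.InjOn (fun m => F C₀ (ι m)) (Finset.univ.image (σf C₀)) := by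
        intro m hm m' hm' hmm'
        obtain ⟨i, -, hi⟩ := Finset.mem_image.1 hm
        obtain ⟨i', -, hi'⟩ := Finset.mem_image.1 hm'
        have := hσ2 C₀ m m' hmm'
        rw [← hi, ← hi', hσidem, hσidem] at this
        rw [← hi, ← hi', this]
      have himg : (Finset.univ.image (σf C₀)).image (fun m => F C₀ (ι m)) = C₀ := by
        apply Finset.ext
        intro e
        constructor
        · intro he
          obtain ⟨m, hm, hme⟩ := Finset.mem_image.1 he
          obtain ⟨i, -, hi⟩ := Finset.mem_image.1 hm
          rw [← hi, hσ1] at hme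
          exact hme ▸ (hFmem C₀ hC₀S (ι i) (hιA i)).1
        · intro he
          obtain ⟨-, -, hmeet, -, -⟩ := hSmem C₀ hC₀S
          obtain ⟨a, hae, haA⟩ := Finset.not_disjoint_iff.1 (hmeet e he)
          obtain ⟨i, hia⟩ := hιsurj a haA
          refine Finset.mem_image.2 ⟨σf C₀ i, Finset.mem_image.2 ⟨i, Finset.mem_univ _, rfl⟩, ?_⟩
          rw [hσ1, hia]
          exact (hFuniq C₀ hC₀S a e he hae).symm
      have hcardim : (Finset.univ.image (σf C₀)).card = j := by
        have := Finset.card_image_of_injOn hinj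
        rw [himg] at this
        obtain ⟨-, hcard, -⟩ := hSmem C₀ hC₀S
        omega
      have hmem : σ i_u ∈ Finset.univ.image σ :=
        Finset.mem_image.2 ⟨i_u, Finset.mem_univ _, rfl⟩
      rw [hM, Finset.card_erase_of_mem hmem, himσ, hcardim]
    -- second signature: the edge through u
    set sig₂ : Finset (Finset V) → Finset V := fun C => F C u with hsig₂
    have hfiber₂ : ∀ e₀ ∈ T₁.image sig₂,
        (T₁.filter (fun C => sig₂ C = e₀)).card ≤ Δ ^ (j - 1) := by
      intro e₀ he₀
      set T₂ := T₁.filter (fun C => sig₂ C = e₀) with hT₂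
      -- injection into the pi set
      have hinjcard : T₂.card ≤ (M.pi (fun m => EH.filter (fun e' => ι m ∈ e'))).card := by
        apply Finset.card_le_card_of_injOn (fun C => fun m _ => F C (ι m))
        · intro C hC
          have hCS : C ∈ S := (Finset.mem_filter.1 ((Finset.mem_filter.1 hC).1)).1
          rw [Finset.mem_coe, Finset.mem_pi]
          intro m _
          rw [Finset.mem_filter]
          obtain ⟨hsub, -⟩ := hSmem C hCS
          obtain ⟨h1, h2⟩ := hFmem C hCS (ι m) (hιA m)
          exact ⟨hsub h1, h2⟩
        · intro C hC C' hC' hCC'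
          have hCT₁ : C ∈ T₁ := (Finset.mem_filter.1 hC).1
          have hC'T₁ : C' ∈ T₁ := (Finset.mem_filter.1 hC').1
          have hCS : C ∈ S := (Finset.mem_filter.1 hCT₁).1
          have hC'S : C' ∈ S := (Finset.mem_filter.1 hC'T₁).1
          have hCe₀ : F C u = e₀ := (Finset.mem_filter.1 hC).2
          have hC'e₀ : F C' u = e₀ := (Finset.mem_filter.1 hC').2
          have hσC : σf C = σ := hσy C hCT₁
          have hσC' : σf C' = σ := hσy C' hC'T₁
          have key : ∀ a ∈ A, F C a = F C' a := by
            intro a ha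
            obtain ⟨i, hia⟩ := hιsurj a ha
            by_cases hcase : σ i = σ i_u
            · have e1 : F C (ι i) = e₀ := by
                have h1 : F C (ι (σf C i)) = F C (ι i) := hσ1 C i
                rw [hσC, hcase, ← hσC] at h1
                rw [← h1, hσ1, hi_u, hCe₀]
              have e2 : F C' (ι i) = e₀ := by
                have h1 : F C' (ι (σf C' i)) = F C' (ι i) := hσ1 C' i
                rw [hσC', hcase, ← hσC'] at h1
                rw [← h1, hσ1, hi_u, hC'e₀]
              rw [← hia, e1, e2]
            · have hmM : σ i ∈ M := by
                rw [hM, Finset.mem_erase]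
                exact ⟨hcase, Finset.mem_image.2 ⟨i, Finset.mem_univ _, rfl⟩⟩
              have := congrFun (congrFun hCC' (σ i)) hmM
              simp only at this
              have e1 : F C (ι i) = F C (ι (σ i)) := by
                rw [← hσC]; exact (hσ1 C i).symm
              have e2 : F C' (ι i) = F C' (ι (σ i)) := by
                rw [← hσC']; exact (hσ1 C' i).symm
              rw [← hia, e1, e2, this]
          rw [hCeq C hCS, hCeq C' hC'S]
          exact Finset.image_congr key
      calc T₂.card ≤ (M.pi (fun m => EH.filter (fun e' => ι m ∈ e'))).card := hinjcard
        _ = ∏ m ∈ M, (EH.filter (fun e' => ι m ∈ e')).card := Finset.card_pi _ _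
        _ ≤ ∏ _m ∈ M, Δ := Finset.prod_le_prod' (fun m _ => hΔ (ι m))
        _ = Δ ^ (j - 1) := by rw [Finset.prod_const, hMcard]
    have himg₂ : (T₁.image sig₂).card ≤ D₂ := by
      have hsub : T₁.image sig₂ ⊆ EH.filter (fun e => u ∈ e ∧ v ∈ e) := by
        intro e he
        obtain ⟨C, hCT₁, hCe⟩ := Finset.mem_image.1 he
        have hCS : C ∈ S := (Finset.mem_filter.1 hCT₁).1
        obtain ⟨hsub', -⟩ := hSmem C hCS
        obtain ⟨h1, h2⟩ := hFmem C hCS u huA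
        obtain ⟨h3, h4⟩ := hFmem C hCS v hvA
        rw [Finset.mem_filter]
        refine ⟨hsub' (hCe ▸ h1), hCe ▸ h2, ?_⟩
        rw [← hCe]
        show v ∈ F C u
        rw [hFuv C hCT₁]
        exact h4
      exact le_trans (Finset.card_le_card hsub) (hcodeg u v huv)
    calc T₁.card ≤ Δ ^ (j - 1) * (T₁.image sig₂).card :=
          Finset.card_le_mul_card_image (f := sig₂) T₁ _ hfiber₂
      _ ≤ Δ ^ (j - 1) * D₂ := Nat.mul_le_mul_left _ himg₂
      _ = D₂ * Δ ^ (j - 1) := Nat.mul_comm _ _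
  -- bound the image of sig₁
  have himg₁ : (S.image sig₁).card ≤ r.choose 2 * r ^ r := by
    have hsub : S.image sig₁ ⊆ (A.powersetCard 2) ×ˢ
        (Finset.univ : Finset (Fin r → Fin r)) := by
      intro y hy
      obtain ⟨C, hCS, hCy⟩ := Finset.mem_image.1 hy
      rw [Finset.mem_product]
      exact ⟨hCy ▸ (hprS C hCS).1, Finset.mem_univ _⟩
    calc (S.image sig₁).card ≤ ((A.powersetCard 2) ×ˢ
          (Finset.univ : Finset (Fin r → Fin r))).card := Finset.card_le_card hsub
      _ = r.choose 2 * r ^ r := by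
          rw [Finset.card_product, Finset.card_powersetCard, hA, Finset.card_univ]
          congr 1
          rw [Fintype.card_fun]
          simp
  have hrr : r ^ r ≤ (k + 1) ^ (2 * k) :=
    le_trans (Nat.pow_le_pow_left (by omega) r)
      (Nat.pow_le_pow_right (by omega) (by omega))
  calc S.card ≤ (D₂ * Δ ^ (j - 1)) * (S.image sig₁).card :=
        Finset.card_le_mul_card_image (f := sig₁) S _ hfiber₁
    _ ≤ (D₂ * Δ ^ (j - 1)) * (r.choose 2 * r ^ r) := Nat.mul_le_mul_left _ himg₁
    _ ≤ (D₂ * Δ ^ (j - 1)) * (r.choose 2 * (k + 1) ^ (2 * k)) := by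
        exact Nat.mul_le_mul_left _ (Nat.mul_le_mul_left _ hrr)
    _ = r.choose 2 * (k + 1) ^ (2 * k) * D₂ * Δ ^ (j - 1) := by ring
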